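/- With S^Ω = S and π a truncation, define S_B = S ∩ π(P), S_T = π(S), and G = S_B^Ω ∩ π(P). Then every element of π(P) that commutes (under Ω) with all elements of S_T also commutes with all elements of G. (In the stabilizer-code language: a local operator on the truncated system that violates no bulk stabilizers and no primary boundary terms also violates no secondary boundary terms.) -/
import Mathlib


/-- `P = ⊕_{i∈I} (ℤ_d)²` with the symplectic pairing
`Ω(a,b) = Σ_i (a_i^X b_i^Z − a_i^Z b_i^X)`. -/
noncomputable def Omega {I : Type*} {d : ℕ} (a b : I →₀ ZMod d × ZMod d) : ZMod d :=
  a.sum fun i v => v.1 * (b i).2 - v.2 * (b i).1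

/-- The commutant `A^Ω = {c ∈ P : Ω(c,a) = 0 for all a ∈ A}`. -/
def commutant {I : Type*} {d : ℕ} (A : Set (I →₀ ZMod d × ZMod d)) :
    Set (I →₀ ZMod d × ZMod d) :=
  {c | ∀ a ∈ A, Omega c a = 0}

lemma Omega_eq_sum {I : Type*} [DecidableEq I] {d : ℕ} (a b : I →₀ ZMod d × ZMod d) :
    Omega a b = ∑ i ∈ a.support ∪ b.support,
      ((a i).1 * (b i).2 - (a i).2 * (b i).1) := by
  exact Finsupp.sum_of_support_subset a Finset.subset_union_left _ (by intro i _; simp)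

lemma Omega_antisymm {I : Type*} [DecidableEq I] {d : ℕ} (a b : I →₀ ZMod d × ZMod d) :
    Omega a b = - Omega b a := by
  rw [Omega_eq_sum, Omega_eq_sum, Finset.union_comm b.support a.support,
    ← Finset.sum_neg_distrib]
  exact Finset.sum_congr rfl fun i _ => by ring

lemma Omega_add_right {I : Type*} {d : ℕ} (c a b : I →₀ ZMod d × ZMod d) :
    Omega c (a + b) = Omega c a + Omega c b := by
  unfold Omega
  rw [← Finsupp.sum_add]
  refine Finsupp.sum_congr fun i _ => ?_
  simp only [Finsupp.add_apply, Prod.fst_add, Prod.snd_add]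
  ring

/-- With `S^Ω = S` and `π` a truncation, set `S_B = S ∩ π(P)`, `S_T = π(S)`, and
`G = S_B^Ω ∩ π(P)`.  Every element of `π(P)` commuting with all of `S_T` also
commutes with all of `G`: no primary violations implies no secondary violations. -/
theorem primary_determines_secondary {I : Type*} {d : ℕ}
    (S : AddSubgroup (I →₀ ZMod d × ZMod d))
    (hS : commutant (S : Set (I →₀ ZMod d × ZMod d)) = (S : Set (I →₀ ZMod d × ZMod d)))
    (π : (I →₀ ZMod d × ZMod d) →+ (I →₀ ZMod d × ZMod d))
    (hproj : ∀ x, π (π x) = π x)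
    (horth : ∀ x, π x = 0 → ∀ y ∈ Set.range π, Omega x y = 0) :
    ∀ c ∈ Set.range π,
      (∀ t ∈ π '' (S : Set (I →₀ ZMod d × ZMod d)), Omega c t = 0) →
      ∀ g ∈ commutant ((S : Set (I →₀ ZMod d × ZMod d)) ∩ Set.range π) ∩ Set.range π,
        Omega c g = 0 := by
  classical
  rintro c hc hcomm g ⟨hg1, hg2⟩
  have hcS : c ∈ (S : Set (I →₀ ZMod d × ZMod d)) := by
    rw [← hS]
    intro s hs
    have h1 : Omega c (π s) = 0 := hcomm _ ⟨s, hs, rfl⟩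
    have hker : π (s - π s) = 0 := by simp [map_sub, hproj]
    have h2 : Omega (s - π s) c = 0 := horth _ hker c hc
    have h3 : Omega c (s - π s) = 0 := by rw [Omega_antisymm, h2, neg_zero]
    have hsum : π s + (s - π s) = s := by abel
    rw [← hsum, Omega_add_right, h1, h3, add_zero]
  have := hg1 c ⟨hcS, hc⟩
  rw [Omega_antisymm, this, neg_zero]
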